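/- Let A, B, C ∈ ℝ^{n×n} with A invertible. If the spectral radius ρ(|CA⁻¹B|) < 1, then for every F ∈ ℝ^{n×n} the new generalized absolute value matrix equation AX + B|CX| = F has exactly one solution X ∈ ℝ^{n×n}. -/

import Mathlib

open Matrix

/-- Componentwise absolute value of a real matrix. -/
noncomputable def matAbs {n : ℕ} (M : Matrix (Fin n) (Fin n) ℝ) : Matrix (Fin n) (Fin n) ℝ :=
  fun i j => |M i j|

/-- Spectral radius of a real square matrix: the supremum of |λ| over its complex
eigenvalues (the complex spectrum of the matrix viewed over ℂ). -/
noncomputable def specRad {m : Type*} [Fintype m] [DecidableEq m]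
    (M : Matrix m m ℝ) : ℝ :=
  sSup ((fun z : ℂ => ‖z‖) '' spectrum ℂ (M.map Complex.ofReal))

section SpecRadAux
attribute [local instance] Matrix.linftyOpNormedRing Matrix.linftyOpNormedAlgebra
noncomputable local instance {n : ℕ} : CompleteSpace (Matrix (Fin n) (Fin n) ℂ) :=
  inferInstance

/-- If the spectral radius of a real matrix is `< 1`, then some power of it has all
row sums (of absolute values) `< 1`. -/
lemma exists_pow_rowsum_lt {n : ℕ} (M : Matrix (Fin n) (Fin n) ℝ)
    (h : specRad M < 1) : ∃ k, ∀ i, ∑ j, |(M ^ k) i j| < 1 := by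
  set M' : Matrix (Fin n) (Fin n) ℂ := M.map Complex.ofReal with hM'
  have hbdd : BddAbove ((fun z : ℂ => ‖z‖) '' spectrum ℂ M') :=
    ((spectrum.isCompact M').image continuous_norm).bddAbove
  have hsr : spectralRadius ℂ M' < 1 := by
    refine lt_of_le_of_lt (iSup₂_le fun z hz => ?_) (ENNReal.ofReal_lt_one.mpr h)
    rw [← ENNReal.ofReal_coe_nnreal]
    exact ENNReal.ofReal_le_ofReal (le_csSup hbdd ⟨z, hz, rfl⟩)
  have hg := spectrum.pow_nnnorm_pow_one_div_tendsto_nhds_spectralRadius M'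
  have hev : ∀ᶠ k : ℕ in Filter.atTop, ((‖M' ^ k‖₊ : ENNReal) ^ (1 / (k:ℝ)) < 1) :=
    hg.eventually_lt_const hsr
  obtain ⟨k, hk1, hk2⟩ := (hev.and (Filter.eventually_gt_atTop 0)).exists
  refine ⟨k, fun i => ?_⟩
  have hnrm : ‖M' ^ k‖₊ < 1 := by
    by_contra hge
    push_neg at hge
    have : (1 : ENNReal) ≤ (‖M' ^ k‖₊ : ENNReal) ^ (1 / (k:ℝ)) :=
      ENNReal.one_le_rpow (by exact_mod_cast hge) (by positivity)
    exact absurd hk1 this.not_gt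
  have hpow : M' ^ k = (M ^ k).map Complex.ofReal := by
    exact (map_pow (Complex.ofRealHom.mapMatrix) M k).symm
  have hrow : (∑ j, ‖(M' ^ k) i j‖₊) < 1 := by
    calc (∑ j, ‖(M' ^ k) i j‖₊) ≤ ‖M' ^ k‖₊ := by
          rw [Matrix.linfty_opNNNorm_def]
          exact Finset.le_sup (f := fun i => ∑ j, ‖(M' ^ k) i j‖₊) (Finset.mem_univ i)
      _ < 1 := hnrm
  have : ∑ j, |(M ^ k) i j| = ((∑ j, ‖(M' ^ k) i j‖₊ : NNReal) : ℝ) := by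
    push_cast
    refine Finset.sum_congr rfl fun j _ => ?_
    rw [hpow]
    simp [Matrix.map_apply, Complex.norm_real]
  rw [this]
  exact_mod_cast hrow

end SpecRadAux

/-- Unique solvability of the fixed-point equation `Y = G - N |Y|` when some power of
`|N|` has all row sums `< 1`. -/
lemma exists_unique_fp {n : ℕ} (N G : Matrix (Fin n) (Fin n) ℝ) (k : ℕ)
    (hk : ∀ i, ∑ j, |((matAbs N) ^ k) i j| < 1) :
    ∃! Y : Matrix (Fin n) (Fin n) ℝ, Y = G - N * matAbs Y := by
  classical
  set M : Matrix (Fin n) (Fin n) ℝ := matAbs N with hM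
  have hMpow : ∀ m i j, 0 ≤ (M ^ m) i j := by
    intro m
    induction m with
    | zero => intro i j; simp [Matrix.one_apply]; split <;> norm_num
    | succ m ih =>
      intro i j
      rw [pow_succ, Matrix.mul_apply]
      exact Finset.sum_nonneg fun l _ => mul_nonneg (ih i l) (abs_nonneg _)
  set T : (Fin n → Fin n → ℝ) → (Fin n → Fin n → ℝ) :=
    fun Y i j => G i j - (N * matAbs (Matrix.of Y)) i j with hT
  have step : ∀ Y1 Y2 : Fin n → Fin n → ℝ, ∀ i j,
      |T Y1 i j - T Y2 i j| ≤ ∑ l, M i l * |Y1 l j - Y2 l j| := by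
    intro Y1 Y2 i j
    have : T Y1 i j - T Y2 i j
        = ∑ l, N i l * (|Y2 l j| - |Y1 l j|) := by
      simp only [hT, Matrix.mul_apply, sub_sub_sub_cancel_left, ← Finset.sum_sub_distrib,
        matAbs, Matrix.of_apply, mul_sub]
    rw [this]
    refine (Finset.abs_sum_le_sum_abs _ _).trans (Finset.sum_le_sum fun l _ => ?_)
    rw [abs_mul]
    refine mul_le_mul_of_nonneg_left ?_ (abs_nonneg _)
    calc |(|Y2 l j| - |Y1 l j|)| ≤ |Y2 l j - Y1 l j| := abs_abs_sub_abs_le_abs_sub _ _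
      _ = |Y1 l j - Y2 l j| := abs_sub_comm _ _
  have iter : ∀ m : ℕ, ∀ Y1 Y2 : Fin n → Fin n → ℝ, ∀ i j,
      |T^[m] Y1 i j - T^[m] Y2 i j| ≤ ∑ l, (M ^ m) i l * |Y1 l j - Y2 l j| := by
    intro m
    induction m with
    | zero =>
      intro Y1 Y2 i j
      have : ∑ l, (M ^ 0) i l * |Y1 l j - Y2 l j| = |Y1 i j - Y2 i j| := by
        simp [Matrix.one_apply, ite_mul]
      simp only [Function.iterate_zero, id]
      exact le_of_eq this.symm
    | succ m ih =>
      intro Y1 Y2 i j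
      rw [Function.iterate_succ_apply', Function.iterate_succ_apply']
      calc |T (T^[m] Y1) i j - T (T^[m] Y2) i j|
          ≤ ∑ l, M i l * |T^[m] Y1 l j - T^[m] Y2 l j| := step _ _ i j
        _ ≤ ∑ l, M i l * (∑ p, (M ^ m) l p * |Y1 p j - Y2 p j|) := by
            refine Finset.sum_le_sum fun l _ => mul_le_mul_of_nonneg_left (ih _ _ l j) ?_
            exact abs_nonneg _
        _ = ∑ p, (M ^ (m+1)) i p * |Y1 p j - Y2 p j| := by
            simp only [Finset.mul_sum]
            rw [Finset.sum_comm]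
            refine Finset.sum_congr rfl fun p _ => ?_
            rw [pow_succ', Matrix.mul_apply, Finset.sum_mul]
            exact Finset.sum_congr rfl fun l _ => by ring
  set K : NNReal := Finset.univ.sup fun i => (∑ j, (M ^ k) i j).toNNReal with hK
  have hKlt : K < 1 := by
    refine Finset.sup_lt_iff (by norm_num) |>.mpr fun i _ => ?_
    refine Real.toNNReal_lt_one.mpr ?_
    calc ∑ j, (M ^ k) i j = ∑ j, |(M ^ k) i j| :=
          Finset.sum_congr rfl fun j _ => (abs_of_nonneg (hMpow k i j)).symm
      _ < 1 := hk i
  have hdist : ∀ Y1 Y2 : Fin n → Fin n → ℝ,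
      dist (T^[k] Y1) (T^[k] Y2) ≤ K * dist Y1 Y2 := by
    intro Y1 Y2
    have hd0 : (0:ℝ) ≤ (K : ℝ) * dist Y1 Y2 :=
      mul_nonneg K.coe_nonneg dist_nonneg
    rw [dist_pi_le_iff hd0]
    intro i
    rw [dist_pi_le_iff hd0]
    intro j
    rw [Real.dist_eq]
    have hE : ∀ l j, |Y1 l j - Y2 l j| ≤ dist Y1 Y2 := by
      intro l j
      calc |Y1 l j - Y2 l j| = dist (Y1 l j) (Y2 l j) := (Real.dist_eq _ _).symm
        _ ≤ dist (Y1 l) (Y2 l) := dist_le_pi_dist _ _ _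
        _ ≤ dist Y1 Y2 := dist_le_pi_dist _ _ _
    calc |T^[k] Y1 i j - T^[k] Y2 i j| ≤ ∑ l, (M ^ k) i l * |Y1 l j - Y2 l j| := iter k Y1 Y2 i j
      _ ≤ ∑ l, (M ^ k) i l * dist Y1 Y2 :=
          Finset.sum_le_sum fun l _ => mul_le_mul_of_nonneg_left (hE l j) (hMpow k i l)
      _ = (∑ l, (M ^ k) i l) * dist Y1 Y2 := (Finset.sum_mul _ _ _).symm
      _ ≤ (K : ℝ) * dist Y1 Y2 := by
          refine mul_le_mul_of_nonneg_right ?_ dist_nonneg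
          have h1 : (∑ l, (M ^ k) i l) = ((∑ l, (M ^ k) i l).toNNReal : ℝ) :=
            (Real.coe_toNNReal _ (Finset.sum_nonneg fun l _ => hMpow k i l)).symm
          rw [h1]
          exact_mod_cast Finset.le_sup (f := fun i => (∑ j, (M ^ k) i j).toNNReal)
            (Finset.mem_univ i)
  have hcontr : ContractingWith K (T^[k]) :=
    ⟨hKlt, LipschitzWith.of_dist_le_mul hdist⟩
  let y₀ := hcontr.fixedPoint (T^[k])
  have hy₀ : Function.IsFixedPt (T^[k]) y₀ := hcontr.fixedPoint_isFixedPt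
  have hTy₀ : T y₀ = y₀ := by
    have h1 : Function.IsFixedPt (T^[k]) (T y₀) := by
      show T^[k] (T y₀) = T y₀
      rw [← Function.iterate_succ_apply, Function.iterate_succ_apply', hy₀]
    exact (hcontr.fixedPoint_unique h1).trans (hcontr.fixedPoint_unique hy₀).symm
  refine ⟨Matrix.of y₀, ?_, ?_⟩
  · ext i j
    have := congrFun (congrFun hTy₀ i) j
    simp only [hT] at this
    rw [Matrix.sub_apply]
    exact this.symm
  · intro Y' hY'
    have hz : T (fun i j => Y' i j) = fun i j => Y' i j := by
      funext i j
      simp only [hT]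
      show G i j - (N * matAbs Y') i j = Y' i j
      conv_rhs => rw [hY']
      rw [Matrix.sub_apply]
    have hfix : Function.IsFixedPt (T^[k]) (fun i j => Y' i j) :=
      Function.IsFixedPt.iterate hz k
    have := hcontr.fixedPoint_unique hfix
    ext i j
    exact congrFun (congrFun this i) j

/-- If A is invertible and ρ(|CA⁻¹B|) < 1, then for every F the NGAVME
AX + B|CX| = F has exactly one solution. -/
theorem ngavme_unique_of_specRad {n : ℕ} (A B C : Matrix (Fin n) (Fin n) ℝ)
    (hA : IsUnit A) (h : specRad (matAbs (C * A⁻¹ * B)) < 1) :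
    ∀ F : Matrix (Fin n) (Fin n) ℝ,
      ∃! X : Matrix (Fin n) (Fin n) ℝ, A * X + B * matAbs (C * X) = F := by
  intro F
  have hdet : IsUnit A.det := (Matrix.isUnit_iff_isUnit_det A).mp hA
  have hAiA : A⁻¹ * A = 1 := Matrix.nonsing_inv_mul A hdet
  have hAAi : A * A⁻¹ = 1 := Matrix.mul_nonsing_inv A hdet
  set N : Matrix (Fin n) (Fin n) ℝ := C * A⁻¹ * B with hN
  set G : Matrix (Fin n) (Fin n) ℝ := C * A⁻¹ * F with hG
  -- key spectral fact
  obtain ⟨k, hk⟩ := exists_pow_rowsum_lt (matAbs N) h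
  obtain ⟨Y, hY, hYu⟩ := exists_unique_fp N G k hk
  -- from a solution of the fixed-point equation build a solution of NGAVME
  set X : Matrix (Fin n) (Fin n) ℝ := A⁻¹ * (F - B * matAbs Y) with hX
  have key : ∀ W : Matrix (Fin n) (Fin n) ℝ,
      C * (A⁻¹ * (F - B * matAbs W)) = G - N * matAbs W := by
    intro W
    calc C * (A⁻¹ * (F - B * matAbs W)) = C * A⁻¹ * (F - B * matAbs W) :=
          (Matrix.mul_assoc C A⁻¹ _).symm
      _ = C * A⁻¹ * F - C * A⁻¹ * (B * matAbs W) := Matrix.mul_sub _ _ _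
      _ = G - N * matAbs W := by
          rw [hG, hN, Matrix.mul_assoc (C * A⁻¹) B (matAbs W)]
  have hCX : C * X = Y := by
    rw [hX, key Y, ← hY]
  refine ⟨X, ?_, ?_⟩
  · have e1 : A * X = F - B * matAbs Y := by
      rw [hX, ← Matrix.mul_assoc, hAAi, Matrix.one_mul]
    show A * X + B * matAbs (C * X) = F
    rw [hCX, e1, sub_add_cancel]
  · intro X' hX'
    set Y' : Matrix (Fin n) (Fin n) ℝ := C * X' with hY'
    have h1 : A * X' = F - B * matAbs Y' := by
      rw [hY']; exact eq_sub_of_add_eq hX'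
    have hXeq : X' = A⁻¹ * (F - B * matAbs Y') := by
      calc X' = (A⁻¹ * A) * X' := by rw [hAiA, Matrix.one_mul]
        _ = A⁻¹ * (A * X') := Matrix.mul_assoc _ _ _
        _ = A⁻¹ * (F - B * matAbs Y') := by rw [h1]
    have hYfix : Y' = G - N * matAbs Y' := by
      conv_lhs => rw [hY', hXeq]
      exact key Y'
    have : Y' = Y := hYu Y' hYfix
    rw [hXeq, this, ← hX]
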